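/- For every even n ≥ 10, the graph D_n is rigid: every graph automorphism of D_n is the identity map. -/

import Mathlib

open SimpleGraph

/-- Vertices of the graph `D_n`: the integers `1, …, n`. -/
abbrev DVert (n : ℕ) := {i : ℕ // 1 ≤ i ∧ i ≤ n}

/-- The power graph `D_n` on vertex set `{1, …, n}`: two distinct vertices `i`, `j` are
adjacent iff `|i − j| = 1` (a path edge) or the 2-adic valuations of `i` and `j` agree
(a clique edge).  Here `padicValNat 2 i` is the largest `k` with `2^k ∣ i`. -/
def Dgraph (n : ℕ) : SimpleGraph (DVert n) :=
  SimpleGraph.fromRel (fun x y =>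
    (x : ℕ) + 1 = (y : ℕ) ∨ padicValNat 2 (x : ℕ) = padicValNat 2 (y : ℕ))

instance instFiniteDVert (n : ℕ) : Finite (DVert n) :=
  Finite.of_injective (fun v => (⟨v.1 - 1, by omega⟩ : Fin n))
    (by
      intro a b h
      have h' : a.1 - 1 = b.1 - 1 := congrArg Fin.val h
      have ha := a.2
      have hb := b.2
      exact Subtype.ext (by omega))

lemma dadj_iff {n : ℕ} (x y : DVert n) :
    (Dgraph n).Adj x y ↔ x ≠ y ∧ ((x : ℕ) + 1 = (y : ℕ) ∨ (y : ℕ) + 1 = (x : ℕ) ∨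
      padicValNat 2 (x : ℕ) = padicValNat 2 (y : ℕ)) := by
  rw [Dgraph, SimpleGraph.fromRel_adj]
  constructor
  · rintro ⟨h, (h2 | h2) | (h2 | h2)⟩
    · exact ⟨h, Or.inl h2⟩
    · exact ⟨h, Or.inr (Or.inr h2)⟩
    · exact ⟨h, Or.inr (Or.inl h2)⟩
    · exact ⟨h, Or.inr (Or.inr h2.symm)⟩
  · rintro ⟨h, h2 | h2 | h2⟩
    · exact ⟨h, Or.inl (Or.inl h2)⟩
    · exact ⟨h, Or.inr (Or.inl h2)⟩
    · exact ⟨h, Or.inl (Or.inr h2)⟩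

lemma v2_zero_iff_odd {x : ℕ} (hx : 1 ≤ x) : padicValNat 2 x = 0 ↔ x % 2 = 1 := by
  have hdvd : (2 : ℕ) ∣ x ↔ x % 2 = 0 := Nat.dvd_iff_mod_eq_zero
  rw [padicValNat.eq_zero_iff, hdvd]
  omega

lemma parity_of_v2 {x y : ℕ} (hx : 1 ≤ x) (hy : 1 ≤ y)
    (h : padicValNat 2 x = padicValNat 2 y) : x % 2 = y % 2 := by
  have hx2 := v2_zero_iff_odd hx
  have hy2 := v2_zero_iff_odd hy
  by_cases h0 : padicValNat 2 x = 0
  · have h1 : x % 2 = 1 := hx2.1 h0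
    have h2 : y % 2 = 1 := hy2.1 (h ▸ h0)
    omega
  · have h1 : x % 2 ≠ 1 := fun hh => h0 (hx2.2 hh)
    have h2 : y % 2 ≠ 1 := fun hh => h0 (by rw [h]; exact hy2.2 hh)
    omega

/-- Decomposition of a positive number as a power of two times an odd number. -/
lemma decomp (x : ℕ) (hx : x ≠ 0) :
    ∃ a, x = 2 ^ padicValNat 2 x * a ∧ a % 2 = 1 := by
  obtain ⟨a, ha⟩ := (pow_padicValNat_dvd : 2 ^ padicValNat 2 x ∣ x)
  refine ⟨a, ha, ?_⟩
  by_contra h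
  have h2 : (2 : ℕ) ∣ a := by omega
  obtain ⟨c, hc⟩ := h2
  apply pow_succ_padicValNat_not_dvd (p := 2) hx
  refine ⟨c, ?_⟩
  calc x = 2 ^ padicValNat 2 x * a := ha
  _ = 2 ^ padicValNat 2 x * (2 * c) := by rw [hc]
  _ = 2 ^ (padicValNat 2 x + 1) * c := by rw [pow_succ]; ring

/-- Two distinct numbers with the same positive 2-adic valuation differ by at least 4. -/
lemma spacing {x y : ℕ} (hx : x ≠ 0) (hy : y ≠ 0) (hxy : x < y)
    (hv : padicValNat 2 x = padicValNat 2 y) (hk : padicValNat 2 x ≠ 0) :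
    x + 4 ≤ y := by
  obtain ⟨a, ha, hae⟩ := decomp x hx
  obtain ⟨b, hb, hbe⟩ := decomp y hy
  have hb' : y = 2 ^ padicValNat 2 x * b := by rw [hv]; exact hb
  have h2k : 2 ≤ 2 ^ padicValNat 2 x := by
    calc 2 = 2 ^ 1 := by norm_num
    _ ≤ 2 ^ padicValNat 2 x := Nat.pow_le_pow_right (by norm_num) (by omega)
  have hab : a < b := by
    by_contra hc
    push_neg at hc
    have h1 : 2 ^ padicValNat 2 x * b ≤ 2 ^ padicValNat 2 x * a :=
      Nat.mul_le_mul (le_refl _) hc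
    omega
  have hab2 : a + 2 ≤ b := by omega
  have hstep : 2 ^ padicValNat 2 x * a + 2 ^ padicValNat 2 x * 2 ≤
      2 ^ padicValNat 2 x * b := by
    have h1 : 2 ^ padicValNat 2 x * (a + 2) ≤ 2 ^ padicValNat 2 x * b :=
      Nat.mul_le_mul (le_refl _) hab2
    rw [Nat.mul_add] at h1
    exact h1
  omega

/-- Adjacency from a path edge. -/
lemma adj_succ {n : ℕ} (v w : DVert n) (h : (v : ℕ) + 1 = (w : ℕ)) :
    (Dgraph n).Adj v w :=
  (dadj_iff v w).2 ⟨fun he => by rw [he] at h; omega, Or.inl h⟩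

/-- Adjacency between two distinct odd vertices. -/
lemma adj_odd {n : ℕ} (v w : DVert n) (hv : (v : ℕ) % 2 = 1) (hw : (w : ℕ) % 2 = 1)
    (hne : (v : ℕ) ≠ (w : ℕ)) : (Dgraph n).Adj v w := by
  refine (dadj_iff v w).2 ⟨fun he => hne (by rw [he]), Or.inr (Or.inr ?_)⟩
  rw [(v2_zero_iff_odd v.2.1).2 hv, (v2_zero_iff_odd w.2.1).2 hw]

/-- The set of odd vertices. -/
def oddSet (n : ℕ) : Set (DVert n) := {v : DVert n | (v : ℕ) % 2 = 1}

lemma ncard_oddSet (n : ℕ) (hn2 : n % 2 = 0) (hn : 2 ≤ n) : (oddSet n).ncard = n / 2 := by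
  rw [← Nat.card_coe_set_eq]
  have hfin : Nat.card (Fin (n / 2)) = n / 2 := by simp
  have hle : Nat.card (oddSet n) ≤ Nat.card (Fin (n / 2)) := by
    refine Nat.card_le_card_of_injective
      (fun x : ↥(oddSet n) => (⟨x.1.1 / 2, by
        have hx : x.1.1 % 2 = 1 := x.2
        have hb := x.1.2
        omega⟩ : Fin (n / 2))) ?_
    intro x y h
    have h' : x.1.1 / 2 = y.1.1 / 2 := congrArg Fin.val h
    have hx : x.1.1 % 2 = 1 := x.2
    have hy : y.1.1 % 2 = 1 := y.2
    exact Subtype.ext (Subtype.ext (by omega))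
  have hge : Nat.card (Fin (n / 2)) ≤ Nat.card (oddSet n) := by
    refine Nat.card_le_card_of_injective
      (fun i : Fin (n / 2) => (⟨⟨2 * i.1 + 1, by have := i.2; omega⟩, by
        simp only [oddSet, Set.mem_setOf_eq]; omega⟩ : ↥(oddSet n))) ?_
    intro i j h
    have h' : 2 * i.1 + 1 = 2 * j.1 + 1 := congrArg (fun z : ↥(oddSet n) => z.1.1) h
    exact Fin.ext (by omega)
  omega

/-- The valuation class of a vertex. -/
def classSet (n : ℕ) (w : DVert n) : Set (DVert n) :=
  {x : DVert n | padicValNat 2 (x : ℕ) = padicValNat 2 (w : ℕ)}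

lemma ncard_classSet_le (n : ℕ) (w : DVert n) (hw : (w : ℕ) % 2 = 0) :
    (classSet n w).ncard ≤ n / 4 + 1 := by
  rw [← Nat.card_coe_set_eq]
  have hk : padicValNat 2 (w : ℕ) ≠ 0 := by
    intro h0
    have := (v2_zero_iff_odd w.2.1).1 h0
    omega
  have hfin : Nat.card (Fin (n / 4 + 1)) = n / 4 + 1 := by simp
  have hle : Nat.card (classSet n w) ≤ Nat.card (Fin (n / 4 + 1)) := by
    refine Nat.card_le_card_of_injective
      (fun x : ↥(classSet n w) => (⟨x.1.1 / 4, by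
        have hb := x.1.2
        omega⟩ : Fin (n / 4 + 1))) ?_
    intro x y h
    have h' : x.1.1 / 4 = y.1.1 / 4 := congrArg Fin.val h
    have hxv : padicValNat 2 x.1.1 = padicValNat 2 (w : ℕ) := x.2
    have hyv : padicValNat 2 y.1.1 = padicValNat 2 (w : ℕ) := y.2
    have hx1 := x.1.2
    have hy1 := y.1.2
    refine Subtype.ext (Subtype.ext ?_)
    by_contra hne
    rcases Nat.lt_or_ge x.1.1 y.1.1 with hab | hab
    · have := spacing (by omega) (by omega) hab (by rw [hxv, hyv]) (by rw [hxv]; exact hk)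
      omega
    · have hab' : y.1.1 < x.1.1 := by omega
      have := spacing (by omega) (by omega) hab' (by rw [hxv, hyv]) (by rw [hyv]; exact hk)
      omega
  omega

/-- The set of vertices with a given value has at most one element. -/
lemma ncard_valSet_le (n : ℕ) (a : ℕ) : {x : DVert n | (x : ℕ) = a}.ncard ≤ 1 := by
  apply (Set.ncard_le_one (Set.toFinite _)).2
  rintro x hx y hy
  exact Subtype.ext (hx.trans hy.symm)

/-- Lower bound for the degree of an odd vertex. -/
lemma lower_odd (n : ℕ) (hn : 10 ≤ n) (hn2 : n % 2 = 0) (v : DVert n)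
    (hv : (v : ℕ) % 2 = 1) : n / 2 ≤ ((Dgraph n).neighborSet v).ncard := by
  have hvn : (v : ℕ) < n := by have := v.2.2; omega
  have hv1 := v.2.1
  set s : DVert n := ⟨(v : ℕ) + 1, by omega⟩ with hs
  have hsub : (oddSet n \ {v}) ∪ {s} ⊆ (Dgraph n).neighborSet v := by
    rintro x (⟨hx1, hx2⟩ | hx1)
    · exact adj_odd v x hv hx1 (fun he => hx2 (Subtype.ext he.symm))
    · simp only [Set.mem_singleton_iff] at hx1
      subst hx1
      exact adj_succ v s rfl
  have hcard : ((oddSet n \ {v}) ∪ {s}).ncard = (n / 2 - 1) + 1 := by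
    rw [Set.ncard_union_eq]
    · rw [Set.ncard_diff_singleton_of_mem (show v ∈ oddSet n from hv), Set.ncard_singleton,
        ncard_oddSet n hn2 (by omega)]
    · rw [Set.disjoint_singleton_right]
      rintro ⟨hs1, -⟩
      have h1 : ((s : DVert n) : ℕ) % 2 = 1 := hs1
      have h2 : ((s : DVert n) : ℕ) = (v : ℕ) + 1 := rfl
      omega
  have := Set.ncard_le_ncard hsub (Set.toFinite _)
  omega

/-- Lower bound for the degree of an interior odd vertex. -/
lemma lower_odd_interior (n : ℕ) (hn : 10 ≤ n) (hn2 : n % 2 = 0) (v : DVert n)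
    (hv : (v : ℕ) % 2 = 1) (hv3 : 3 ≤ (v : ℕ)) :
    n / 2 + 1 ≤ ((Dgraph n).neighborSet v).ncard := by
  have hvn : (v : ℕ) < n := by have := v.2.2; omega
  set s : DVert n := ⟨(v : ℕ) + 1, by omega⟩ with hs
  set p : DVert n := ⟨(v : ℕ) - 1, by omega⟩ with hp
  have hsub : (oddSet n \ {v}) ∪ {p, s} ⊆ (Dgraph n).neighborSet v := by
    rintro x (⟨hx1, hx2⟩ | hx1 | hx1)
    · exact adj_odd v x hv hx1 (fun he => hx2 (Subtype.ext he.symm))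
    · subst hx1
      exact (Dgraph n).adj_symm (adj_succ p v (by
        have h2 : ((p : DVert n) : ℕ) = (v : ℕ) - 1 := rfl
        omega))
    · simp only [Set.mem_singleton_iff] at hx1
      subst hx1
      exact adj_succ v s rfl
  have hps : p ≠ s := by
    intro h
    have h1 := congrArg Subtype.val h
    have h2 : ((p : DVert n) : ℕ) = (v : ℕ) - 1 := rfl
    have h3 : ((s : DVert n) : ℕ) = (v : ℕ) + 1 := rfl
    omega
  have hcard : ((oddSet n \ {v}) ∪ {p, s}).ncard = (n / 2 - 1) + 2 := by
    rw [Set.ncard_union_eq]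
    · rw [Set.ncard_diff_singleton_of_mem (show v ∈ oddSet n from hv), Set.ncard_pair hps,
        ncard_oddSet n hn2 (by omega)]
    · rw [Set.disjoint_iff_forall_ne]
      rintro a ⟨ha1, -⟩ b hb hab
      have ha1' : ((a : DVert n) : ℕ) % 2 = 1 := ha1
      have h2 : ((p : DVert n) : ℕ) = (v : ℕ) - 1 := rfl
      have h3 : ((s : DVert n) : ℕ) = (v : ℕ) + 1 := rfl
      rcases hb with hb | hb
      · subst hab; subst hb
        omega
      · simp only [Set.mem_singleton_iff] at hb
        subst hab; subst hb
        omega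
  have := Set.ncard_le_ncard hsub (Set.toFinite _)
  omega

/-- Upper bound for the degree of an even vertex. -/
lemma upper_even (n : ℕ) (w : DVert n) (hw : (w : ℕ) % 2 = 0) :
    ((Dgraph n).neighborSet w).ncard ≤ n / 4 + 2 := by
  have hsub : (Dgraph n).neighborSet w ⊆
      (classSet n w \ {w}) ∪ ({x : DVert n | (x : ℕ) = (w : ℕ) - 1} ∪
        {x : DVert n | (x : ℕ) = (w : ℕ) + 1}) := by
    intro x hx
    rw [SimpleGraph.mem_neighborSet, dadj_iff] at hx
    obtain ⟨hne, h | h | h⟩ := hx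
    · right; right; simp only [Set.mem_setOf_eq]; omega
    · right; left; simp only [Set.mem_setOf_eq]
      have := x.2.1
      omega
    · left
      exact ⟨h.symm, fun he => hne (Set.mem_singleton_iff.1 he).symm⟩
  have hmem : w ∈ classSet n w := rfl
  have h1 : (classSet n w \ {w}).ncard ≤ n / 4 := by
    rw [Set.ncard_diff_singleton_of_mem hmem]
    have h2 := ncard_classSet_le n w hw
    have hpos : 0 < (classSet n w).ncard :=
      (Set.ncard_pos (Set.toFinite _)).2 ⟨w, hmem⟩
    omega
  have h2 := ncard_valSet_le n ((w : ℕ) - 1)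
  have h3 := ncard_valSet_le n ((w : ℕ) + 1)
  calc ((Dgraph n).neighborSet w).ncard ≤ _ := Set.ncard_le_ncard hsub (Set.toFinite _)
  _ ≤ (classSet n w \ {w}).ncard + ({x : DVert n | (x : ℕ) = (w : ℕ) - 1} ∪
        {x : DVert n | (x : ℕ) = (w : ℕ) + 1}).ncard := Set.ncard_union_le _ _
  _ ≤ (classSet n w \ {w}).ncard + (({x : DVert n | (x : ℕ) = (w : ℕ) - 1}).ncard +
        ({x : DVert n | (x : ℕ) = (w : ℕ) + 1}).ncard) :=
      Nat.add_le_add_left (Set.ncard_union_le _ _) _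
  _ ≤ n / 4 + 2 := by omega

/-- Upper bound for the degree of the vertex 1. -/
lemma upper_one (n : ℕ) (hn : 10 ≤ n) (hn2 : n % 2 = 0) :
    ((Dgraph n).neighborSet (⟨1, by omega⟩ : DVert n)).ncard ≤ n / 2 := by
  set one : DVert n := ⟨1, by omega⟩ with hone
  have hsub : (Dgraph n).neighborSet one ⊆
      (oddSet n \ {one}) ∪ {x : DVert n | (x : ℕ) = 2} := by
    intro x hx
    rw [SimpleGraph.mem_neighborSet, dadj_iff] at hx
    have honev : ((one : DVert n) : ℕ) = 1 := rfl
    obtain ⟨hne, h | h | h⟩ := hx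
    · right; simp only [Set.mem_setOf_eq]
      omega
    · exfalso
      have := x.2.1
      omega
    · left
      refine ⟨?_, fun he => hne (Set.mem_singleton_iff.1 he).symm⟩
      have h1 : padicValNat 2 ((one : DVert n) : ℕ) = 0 := by
        rw [honev]
        exact padicValNat.one
      have hx0 : padicValNat 2 ((x : DVert n) : ℕ) = 0 := by rw [← h, h1]
      exact (v2_zero_iff_odd x.2.1).1 hx0
  have hmem : one ∈ oddSet n := by
    show ((one : DVert n) : ℕ) % 2 = 1
    rfl
  have h1' : (oddSet n \ {one}).ncard = n / 2 - 1 := by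
    rw [Set.ncard_diff_singleton_of_mem hmem, ncard_oddSet n hn2 (by omega)]
  have h2 := ncard_valSet_le n 2
  have hhalf : 5 ≤ n / 2 := by omega
  calc ((Dgraph n).neighborSet one).ncard ≤ _ := Set.ncard_le_ncard hsub (Set.toFinite _)
  _ ≤ (oddSet n \ {one}).ncard + ({x : DVert n | (x : ℕ) = 2}).ncard :=
      Set.ncard_union_le _ _
  _ ≤ n / 2 := by omega

/-- Any automorphism takes odd vertices to odd vertices. -/
lemma odd_to_odd (n : ℕ) (hn : 10 ≤ n) (hn2 : n % 2 = 0) (ψ : Dgraph n ≃g Dgraph n)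
    (v : DVert n) (hv : (v : ℕ) % 2 = 1) : ((ψ v : DVert n) : ℕ) % 2 = 1 := by
  by_contra h
  have hweven : ((ψ v : DVert n) : ℕ) % 2 = 0 := by omega
  have e1 := lower_odd n hn hn2 v hv
  have e2 : ((Dgraph n).neighborSet v).ncard = ((Dgraph n).neighborSet (ψ v)).ncard := by
    rw [← Nat.card_coe_set_eq, ← Nat.card_coe_set_eq]
    exact Nat.card_congr (ψ.mapNeighborSet v)
  have e3 := upper_even n (ψ v) hweven
  omega

/-- For every even `n ≥ 10`, the graph `D_n` is rigid: every graph
automorphism of `D_n` is the identity. -/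
theorem stmt10 (n : ℕ) (hn : 10 ≤ n) (heven : Even n) (φ : Dgraph n ≃g Dgraph n) :
    ∀ v : DVert n, φ v = v := by
  have hn2 : n % 2 = 0 := by obtain ⟨k, hk⟩ := heven; omega
  -- parity is preserved pointwise
  have hparity : ∀ v : DVert n, ((φ v : DVert n) : ℕ) % 2 = (v : ℕ) % 2 := by
    intro v
    rcases Nat.mod_two_eq_zero_or_one (v : ℕ) with hv | hv
    · rw [hv]
      by_contra h
      have hodd : ((φ v : DVert n) : ℕ) % 2 = 1 := by omega
      have := odd_to_odd n hn hn2 φ.symm (φ v) hodd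
      rw [RelIso.symm_apply_apply] at this
      omega
    · rw [hv]; exact odd_to_odd n hn hn2 φ v hv
  -- φ fixes the vertex 1
  set one : DVert n := ⟨1, by omega⟩ with hone
  have hfix1 : φ one = one := by
    by_contra h
    have honev : ((one : DVert n) : ℕ) = 1 := rfl
    have hodd : ((φ one : DVert n) : ℕ) % 2 = 1 := by
      have := hparity one
      omega
    have hne1 : ((φ one : DVert n) : ℕ) ≠ 1 := by
      intro he
      exact h (Subtype.ext (by omega))
    have h3 : 3 ≤ ((φ one : DVert n) : ℕ) := by
      have := (φ one : DVert n).2.1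
      omega
    have e1 := lower_odd_interior n hn hn2 (φ one) hodd h3
    have e2 : ((Dgraph n).neighborSet one).ncard =
        ((Dgraph n).neighborSet (φ one)).ncard := by
      rw [← Nat.card_coe_set_eq, ← Nat.card_coe_set_eq]
      exact Nat.card_congr (φ.mapNeighborSet one)
    have e3 := upper_one n hn hn2
    rw [← hone] at e3
    omega
  -- induction along the path
  have key : ∀ i : ℕ, ∀ h : 1 ≤ i ∧ i ≤ n, φ ⟨i, h⟩ = ⟨i, h⟩ := by
    intro i
    induction i using Nat.strong_induction_on with
    | _ i IH =>
      intro h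
      by_cases h1 : i = 1
      · subst h1
        exact hfix1
      by_cases h2 : i = 2
      · subst h2
        set two : DVert n := ⟨2, h⟩ with htwo
        have honev : ((one : DVert n) : ℕ) = 1 := rfl
        have htwov : ((two : DVert n) : ℕ) = 2 := rfl
        have hadj : (Dgraph n).Adj one two := adj_succ one two (by omega)
        have hadj2 : (Dgraph n).Adj (φ one) (φ two) := φ.map_adj_iff.2 hadj
        rw [hfix1] at hadj2
        rw [dadj_iff] at hadj2
        have hpar : ((φ two : DVert n) : ℕ) % 2 = 0 := by
          have := hparity two
          omega
        obtain ⟨hne, hc | hc | hc⟩ := hadj2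
        · exact Subtype.ext (by omega)
        · exfalso
          have := (φ two : DVert n).2.1
          omega
        · exfalso
          have := parity_of_v2 one.2.1 (φ two : DVert n).2.1 hc
          omega
      -- i ≥ 3
      have h3 : 3 ≤ i := by omega
      set cur : DVert n := ⟨i, h⟩ with hcur
      set prev : DVert n := ⟨i - 1, by omega⟩ with hprev
      set pprev : DVert n := ⟨i - 2, by omega⟩ with hpprev
      have hcurv : ((cur : DVert n) : ℕ) = i := rfl
      have hprevv : ((prev : DVert n) : ℕ) = i - 1 := rfl
      have hppv : ((pprev : DVert n) : ℕ) = i - 2 := rfl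
      have hIHp : φ prev = prev := IH (i - 1) (by omega) _
      have hIHpp : φ pprev = pprev := IH (i - 2) (by omega) _
      have hadj : (Dgraph n).Adj prev cur := adj_succ prev cur (by omega)
      have hadj2 : (Dgraph n).Adj prev (φ cur) := by
        have := φ.map_adj_iff.2 hadj
        rwa [hIHp] at this
      rw [dadj_iff] at hadj2
      have hpar : ((φ cur : DVert n) : ℕ) % 2 = i % 2 := by
        have := hparity cur
        omega
      obtain ⟨hne, hc | hc | hc⟩ := hadj2
      · exact Subtype.ext (by omega)
      · exfalso
        have hval : ((φ cur : DVert n) : ℕ) = i - 2 := by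
          have := (φ cur : DVert n).2.1
          omega
        have heq : φ cur = pprev := Subtype.ext (by omega)
        rw [← hIHpp] at heq
        have hvv := congrArg Subtype.val (φ.injective heq)
        omega
      · exfalso
        have := parity_of_v2 prev.2.1 (φ cur : DVert n).2.1 hc
        omega
  intro v
  obtain ⟨i, hi⟩ := v
  exact key i hi
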